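/- For n ≥ 2 set D_n = 1 + Σ_{j=1}^{n−2} C(n,j)·X_{n−j}, where C(n,j) is the binomial coefficient. Then D_n/X_n → √e − 1 as n → ∞. -/

import Mathlib

/-- The sequence `X_n` counting equivalence classes of circular planar electrical networks:
`X_1 = 1` and, for `n ≥ 2`,
`X_n = 2(n-1) X_{n-1} + ∑_{j=2}^{n-2} (j-1) X_j X_{n-j}` (the sum being empty for `n ≤ 3`;
here it is written over the attached index set to establish termination). -/
def X : ℕ → ℕ
  | 0 => 1
  | 1 => 1
  | n + 2 =>
      2 * (n + 1) * X (n + 1) +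
        ∑ j ∈ (Finset.Icc 2 n).attach, (j.1 - 1) * X j.1 * X (n + 2 - j.1)
decreasing_by
  · exact Nat.lt_succ_self (n + 1)
  · have := j.2; rw [Finset.mem_Icc] at this; omega
  · have := j.2; rw [Finset.mem_Icc] at this; omega


open scoped Nat

/-- `D_n = 1 + ∑_{j=1}^{n-2} C(n,j)·X_{n-j}`, counting certain non-full wiring diagrams. -/
def D (n : ℕ) : ℕ := 1 + ∑ j ∈ Finset.Icc 1 (n - 2), n.choose j * X (n - j)



lemma X_rec (n : ℕ) : X (n+2) = 2*(n+1)*X (n+1) + ∑ j ∈ Finset.Icc 2 n, (j-1)*X j*X (n+2-j) := by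
  rw [X, ← Finset.sum_attach (Finset.Icc 2 n) (fun j => (j-1)*X j*X (n+2-j))]

lemma X0 : X 0 = 1 := by rw [X]
lemma X1 : X 1 = 1 := by rw [X]
lemma X2 : X 2 = 2 := by have h := X_rec 0; simpa [X1] using h
lemma X3 : X 3 = 8 := by have h := X_rec 1; simpa [X2] using h
lemma X4 : X 4 = 52 := by
  have key : ∀ Y : ℕ → ℕ, Y 2 = 2 → Y 3 = 8 →
      Y (2+2) = 2*(2+1)*Y (2+1) + ∑ j ∈ Finset.Icc 2 2, (j-1)*Y j*Y (2+2-j) → Y 4 = 52 := by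
    intro Y X2 X3 h
    rw [← Finset.Ico_add_one_right_eq_Icc, Finset.sum_Ico_eq_sum_range] at h
    norm_num [Finset.sum_range_succ, X2, X3] at h
    exact h
  exact key X X2 X3 (X_rec 2)
lemma X5 : X 5 = 464 := by
  have key : ∀ Y : ℕ → ℕ, Y 2 = 2 → Y 3 = 8 → Y 4 = 52 →
      Y (3+2) = 2*(3+1)*Y (3+1) + ∑ j ∈ Finset.Icc 2 3, (j-1)*Y j*Y (3+2-j) → Y 5 = 464 := by
    intro Y X2 X3 X4 h
    rw [← Finset.Ico_add_one_right_eq_Icc, Finset.sum_Ico_eq_sum_range] at h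
    norm_num [Finset.sum_range_succ, X2, X3, X4] at h
    exact h
  exact key X X2 X3 X4 (X_rec 3)
lemma X6 : X 6 = 5184 := by
  have key : ∀ Y : ℕ → ℕ, Y 2 = 2 → Y 3 = 8 → Y 4 = 52 → Y 5 = 464 →
      Y (4+2) = 2*(4+1)*Y (4+1) + ∑ j ∈ Finset.Icc 2 4, (j-1)*Y j*Y (4+2-j) → Y 6 = 5184 := by
    intro Y X2 X3 X4 X5 h
    rw [← Finset.Ico_add_one_right_eq_Icc, Finset.sum_Ico_eq_sum_range] at h
    norm_num [Finset.sum_range_succ, X2, X3, X4, X5] at h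
    exact h
  exact key X X2 X3 X4 X5 (X_rec 4)
lemma X7 : X 7 = 68928 := by
  have key : ∀ Y : ℕ → ℕ, Y 2 = 2 → Y 3 = 8 → Y 4 = 52 → Y 5 = 464 → Y 6 = 5184 →
      Y (5+2) = 2*(5+1)*Y (5+1) + ∑ j ∈ Finset.Icc 2 5, (j-1)*Y j*Y (5+2-j) → Y 7 = 68928 := by
    intro Y X2 X3 X4 X5 X6 h
    rw [← Finset.Ico_add_one_right_eq_Icc, Finset.sum_Ico_eq_sum_range] at h
    norm_num [Finset.sum_range_succ, X2, X3, X4, X5, X6] at h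
    exact h
  exact key X X2 X3 X4 X5 X6 (X_rec 5)
lemma X8 : X 8 = 1057584 := by
  have key : ∀ Y : ℕ → ℕ, Y 2 = 2 → Y 3 = 8 → Y 4 = 52 → Y 5 = 464 → Y 6 = 5184 → Y 7 = 68928 →
      Y (6+2) = 2*(6+1)*Y (6+1) + ∑ j ∈ Finset.Icc 2 6, (j-1)*Y j*Y (6+2-j) → Y 8 = 1057584 := by
    intro Y X2 X3 X4 X5 X6 X7 h
    rw [← Finset.Ico_add_one_right_eq_Icc, Finset.sum_Ico_eq_sum_range] at h
    norm_num [Finset.sum_range_succ, X2, X3, X4, X5, X6, X7] at h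
    exact h
  exact key X X2 X3 X4 X5 X6 X7 (X_rec 6)
lemma X9 : X 9 = 18345536 := by
  have key : ∀ Y : ℕ → ℕ, Y 2 = 2 → Y 3 = 8 → Y 4 = 52 → Y 5 = 464 → Y 6 = 5184 → Y 7 = 68928 → Y 8 = 1057584 →
      Y (7+2) = 2*(7+1)*Y (7+1) + ∑ j ∈ Finset.Icc 2 7, (j-1)*Y j*Y (7+2-j) → Y 9 = 18345536 := by
    intro Y X2 X3 X4 X5 X6 X7 X8 h
    rw [← Finset.Ico_add_one_right_eq_Icc, Finset.sum_Ico_eq_sum_range] at h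
    norm_num [Finset.sum_range_succ, X2, X3, X4, X5, X6, X7, X8] at h
    exact h
  exact key X X2 X3 X4 X5 X6 X7 X8 (X_rec 7)
lemma X10 : X 10 = 354570112 := by
  have key : ∀ Y : ℕ → ℕ, Y 2 = 2 → Y 3 = 8 → Y 4 = 52 → Y 5 = 464 → Y 6 = 5184 → Y 7 = 68928 → Y 8 = 1057584 → Y 9 = 18345536 →
      Y (8+2) = 2*(8+1)*Y (8+1) + ∑ j ∈ Finset.Icc 2 8, (j-1)*Y j*Y (8+2-j) → Y 10 = 354570112 := by
    intro Y X2 X3 X4 X5 X6 X7 X8 X9 h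
    rw [← Finset.Ico_add_one_right_eq_Icc, Finset.sum_Ico_eq_sum_range] at h
    norm_num [Finset.sum_range_succ, X2, X3, X4, X5, X6, X7, X8, X9] at h
    exact h
  exact key X X2 X3 X4 X5 X6 X7 X8 X9 (X_rec 8)
lemma X11 : X 11 = 7551674624 := by
  have key : ∀ Y : ℕ → ℕ, Y 2 = 2 → Y 3 = 8 → Y 4 = 52 → Y 5 = 464 → Y 6 = 5184 → Y 7 = 68928 → Y 8 = 1057584 → Y 9 = 18345536 → Y 10 = 354570112 →
      Y (9+2) = 2*(9+1)*Y (9+1) + ∑ j ∈ Finset.Icc 2 9, (j-1)*Y j*Y (9+2-j) → Y 11 = 7551674624 := by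
    intro Y X2 X3 X4 X5 X6 X7 X8 X9 X10 h
    rw [← Finset.Ico_add_one_right_eq_Icc, Finset.sum_Ico_eq_sum_range] at h
    norm_num [Finset.sum_range_succ, X2, X3, X4, X5, X6, X7, X8, X9, X10] at h
    exact h
  exact key X X2 X3 X4 X5 X6 X7 X8 X9 X10 (X_rec 9)
lemma X12 : X 12 = 175700025728 := by
  have key : ∀ Y : ℕ → ℕ, Y 2 = 2 → Y 3 = 8 → Y 4 = 52 → Y 5 = 464 → Y 6 = 5184 → Y 7 = 68928 → Y 8 = 1057584 → Y 9 = 18345536 → Y 10 = 354570112 → Y 11 = 7551674624 →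
      Y (10+2) = 2*(10+1)*Y (10+1) + ∑ j ∈ Finset.Icc 2 10, (j-1)*Y j*Y (10+2-j) → Y 12 = 175700025728 := by
    intro Y X2 X3 X4 X5 X6 X7 X8 X9 X10 X11 h
    rw [← Finset.Ico_add_one_right_eq_Icc, Finset.sum_Ico_eq_sum_range] at h
    norm_num [Finset.sum_range_succ, X2, X3, X4, X5, X6, X7, X8, X9, X10, X11] at h
    exact h
  exact key X X2 X3 X4 X5 X6 X7 X8 X9 X10 X11 (X_rec 10)
lemma X13 : X 13 = 4433961734656 := by
  have key : ∀ Y : ℕ → ℕ, Y 2 = 2 → Y 3 = 8 → Y 4 = 52 → Y 5 = 464 → Y 6 = 5184 → Y 7 = 68928 → Y 8 = 1057584 → Y 9 = 18345536 → Y 10 = 354570112 → Y 11 = 7551674624 → Y 12 = 175700025728 →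
      Y (11+2) = 2*(11+1)*Y (11+1) + ∑ j ∈ Finset.Icc 2 11, (j-1)*Y j*Y (11+2-j) → Y 13 = 4433961734656 := by
    intro Y X2 X3 X4 X5 X6 X7 X8 X9 X10 X11 X12 h
    rw [← Finset.Ico_add_one_right_eq_Icc, Finset.sum_Ico_eq_sum_range] at h
    norm_num [Finset.sum_range_succ, X2, X3, X4, X5, X6, X7, X8, X9, X10, X11, X12] at h
    exact h
  exact key X X2 X3 X4 X5 X6 X7 X8 X9 X10 X11 X12 (X_rec 11)
lemma X14 : X 14 = 120642462777344 := by
  have key : ∀ Y : ℕ → ℕ, Y 2 = 2 → Y 3 = 8 → Y 4 = 52 → Y 5 = 464 → Y 6 = 5184 → Y 7 = 68928 → Y 8 = 1057584 → Y 9 = 18345536 → Y 10 = 354570112 → Y 11 = 7551674624 → Y 12 = 175700025728 → Y 13 = 4433961734656 →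
      Y (12+2) = 2*(12+1)*Y (12+1) + ∑ j ∈ Finset.Icc 2 12, (j-1)*Y j*Y (12+2-j) → Y 14 = 120642462777344 := by
    intro Y X2 X3 X4 X5 X6 X7 X8 X9 X10 X11 X12 X13 h
    rw [← Finset.Ico_add_one_right_eq_Icc, Finset.sum_Ico_eq_sum_range] at h
    norm_num [Finset.sum_range_succ, X2, X3, X4, X5, X6, X7, X8, X9, X10, X11, X12, X13] at h
    exact h
  exact key X X2 X3 X4 X5 X6 X7 X8 X9 X10 X11 X12 X13 (X_rec 12)
lemma X15 : X 15 = 3520972469815296 := by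
  have key : ∀ Y : ℕ → ℕ, Y 2 = 2 → Y 3 = 8 → Y 4 = 52 → Y 5 = 464 → Y 6 = 5184 → Y 7 = 68928 → Y 8 = 1057584 → Y 9 = 18345536 → Y 10 = 354570112 → Y 11 = 7551674624 → Y 12 = 175700025728 → Y 13 = 4433961734656 → Y 14 = 120642462777344 →
      Y (13+2) = 2*(13+1)*Y (13+1) + ∑ j ∈ Finset.Icc 2 13, (j-1)*Y j*Y (13+2-j) → Y 15 = 3520972469815296 := by
    intro Y X2 X3 X4 X5 X6 X7 X8 X9 X10 X11 X12 X13 X14 h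
    rw [← Finset.Ico_add_one_right_eq_Icc, Finset.sum_Ico_eq_sum_range] at h
    norm_num [Finset.sum_range_succ, X2, X3, X4, X5, X6, X7, X8, X9, X10, X11, X12, X13, X14] at h
    exact h
  exact key X X2 X3 X4 X5 X6 X7 X8 X9 X10 X11 X12 X13 X14 (X_rec 13)
lemma X16 : X 16 = 109731998026937088 := by
  have key : ∀ Y : ℕ → ℕ, Y 2 = 2 → Y 3 = 8 → Y 4 = 52 → Y 5 = 464 → Y 6 = 5184 → Y 7 = 68928 → Y 8 = 1057584 → Y 9 = 18345536 → Y 10 = 354570112 → Y 11 = 7551674624 → Y 12 = 175700025728 → Y 13 = 4433961734656 → Y 14 = 120642462777344 → Y 15 = 3520972469815296 →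
      Y (14+2) = 2*(14+1)*Y (14+1) + ∑ j ∈ Finset.Icc 2 14, (j-1)*Y j*Y (14+2-j) → Y 16 = 109731998026937088 := by
    intro Y X2 X3 X4 X5 X6 X7 X8 X9 X10 X11 X12 X13 X14 X15 h
    rw [← Finset.Ico_add_one_right_eq_Icc, Finset.sum_Ico_eq_sum_range] at h
    norm_num [Finset.sum_range_succ, X2, X3, X4, X5, X6, X7, X8, X9, X10, X11, X12, X13, X14, X15] at h
    exact h
  exact key X X2 X3 X4 X5 X6 X7 X8 X9 X10 X11 X12 X13 X14 X15 (X_rec 14)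
lemma X17 : X 17 = 3637456413350962176 := by
  have key : ∀ Y : ℕ → ℕ, Y 2 = 2 → Y 3 = 8 → Y 4 = 52 → Y 5 = 464 → Y 6 = 5184 → Y 7 = 68928 → Y 8 = 1057584 → Y 9 = 18345536 → Y 10 = 354570112 → Y 11 = 7551674624 → Y 12 = 175700025728 → Y 13 = 4433961734656 → Y 14 = 120642462777344 → Y 15 = 3520972469815296 → Y 16 = 109731998026937088 →
      Y (15+2) = 2*(15+1)*Y (15+1) + ∑ j ∈ Finset.Icc 2 15, (j-1)*Y j*Y (15+2-j) → Y 17 = 3637456413350962176 := by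
    intro Y X2 X3 X4 X5 X6 X7 X8 X9 X10 X11 X12 X13 X14 X15 X16 h
    rw [← Finset.Ico_add_one_right_eq_Icc, Finset.sum_Ico_eq_sum_range] at h
    norm_num [Finset.sum_range_succ, X2, X3, X4, X5, X6, X7, X8, X9, X10, X11, X12, X13, X14, X15, X16] at h
    exact h
  exact key X X2 X3 X4 X5 X6 X7 X8 X9 X10 X11 X12 X13 X14 X15 X16 (X_rec 15)
lemma X18 : X 18 = 127800512612435896320 := by
  have key : ∀ Y : ℕ → ℕ, Y 2 = 2 → Y 3 = 8 → Y 4 = 52 → Y 5 = 464 → Y 6 = 5184 → Y 7 = 68928 → Y 8 = 1057584 → Y 9 = 18345536 → Y 10 = 354570112 → Y 11 = 7551674624 → Y 12 = 175700025728 → Y 13 = 4433961734656 → Y 14 = 120642462777344 → Y 15 = 3520972469815296 → Y 16 = 109731998026937088 → Y 17 = 3637456413350962176 →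
      Y (16+2) = 2*(16+1)*Y (16+1) + ∑ j ∈ Finset.Icc 2 16, (j-1)*Y j*Y (16+2-j) → Y 18 = 127800512612435896320 := by
    intro Y X2 X3 X4 X5 X6 X7 X8 X9 X10 X11 X12 X13 X14 X15 X16 X17 h
    rw [← Finset.Ico_add_one_right_eq_Icc, Finset.sum_Ico_eq_sum_range] at h
    norm_num [Finset.sum_range_succ, X2, X3, X4, X5, X6, X7, X8, X9, X10, X11, X12, X13, X14, X15, X16, X17] at h
    exact h
  exact key X X2 X3 X4 X5 X6 X7 X8 X9 X10 X11 X12 X13 X14 X15 X16 X17 (X_rec 16)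
lemma X19 : X 19 = 4744322680749258117120 := by
  have key : ∀ Y : ℕ → ℕ, Y 2 = 2 → Y 3 = 8 → Y 4 = 52 → Y 5 = 464 → Y 6 = 5184 → Y 7 = 68928 → Y 8 = 1057584 → Y 9 = 18345536 → Y 10 = 354570112 → Y 11 = 7551674624 → Y 12 = 175700025728 → Y 13 = 4433961734656 → Y 14 = 120642462777344 → Y 15 = 3520972469815296 → Y 16 = 109731998026937088 → Y 17 = 3637456413350962176 → Y 18 = 127800512612435896320 →
      Y (17+2) = 2*(17+1)*Y (17+1) + ∑ j ∈ Finset.Icc 2 17, (j-1)*Y j*Y (17+2-j) → Y 19 = 4744322680749258117120 := by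
    intro Y X2 X3 X4 X5 X6 X7 X8 X9 X10 X11 X12 X13 X14 X15 X16 X17 X18 h
    rw [← Finset.Ico_add_one_right_eq_Icc, Finset.sum_Ico_eq_sum_range] at h
    norm_num [Finset.sum_range_succ, X2, X3, X4, X5, X6, X7, X8, X9, X10, X11, X12, X13, X14, X15, X16, X17, X18] at h
    exact h
  exact key X X2 X3 X4 X5 X6 X7 X8 X9 X10 X11 X12 X13 X14 X15 X16 X17 X18 (X_rec 17)
lemma X20 : X 20 = 185564718888473096325120 := by
  have key : ∀ Y : ℕ → ℕ, Y 2 = 2 → Y 3 = 8 → Y 4 = 52 → Y 5 = 464 → Y 6 = 5184 → Y 7 = 68928 → Y 8 = 1057584 → Y 9 = 18345536 → Y 10 = 354570112 → Y 11 = 7551674624 → Y 12 = 175700025728 → Y 13 = 4433961734656 → Y 14 = 120642462777344 → Y 15 = 3520972469815296 → Y 16 = 109731998026937088 → Y 17 = 3637456413350962176 → Y 18 = 127800512612435896320 → Y 19 = 4744322680749258117120 →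
      Y (18+2) = 2*(18+1)*Y (18+1) + ∑ j ∈ Finset.Icc 2 18, (j-1)*Y j*Y (18+2-j) → Y 20 = 185564718888473096325120 := by
    intro Y X2 X3 X4 X5 X6 X7 X8 X9 X10 X11 X12 X13 X14 X15 X16 X17 X18 X19 h
    rw [← Finset.Ico_add_one_right_eq_Icc, Finset.sum_Ico_eq_sum_range] at h
    norm_num [Finset.sum_range_succ, X2, X3, X4, X5, X6, X7, X8, X9, X10, X11, X12, X13, X14, X15, X16, X17, X18, X19] at h
    exact h
  exact key X X2 X3 X4 X5 X6 X7 X8 X9 X10 X11 X12 X13 X14 X15 X16 X17 X18 X19 (X_rec 18)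
lemma X21 : X 21 = 7627565912218461446430720 := by
  have key : ∀ Y : ℕ → ℕ, Y 2 = 2 → Y 3 = 8 → Y 4 = 52 → Y 5 = 464 → Y 6 = 5184 → Y 7 = 68928 → Y 8 = 1057584 → Y 9 = 18345536 → Y 10 = 354570112 → Y 11 = 7551674624 → Y 12 = 175700025728 → Y 13 = 4433961734656 → Y 14 = 120642462777344 → Y 15 = 3520972469815296 → Y 16 = 109731998026937088 → Y 17 = 3637456413350962176 → Y 18 = 127800512612435896320 → Y 19 = 4744322680749258117120 → Y 20 = 185564718888473096325120 →
      Y (19+2) = 2*(19+1)*Y (19+1) + ∑ j ∈ Finset.Icc 2 19, (j-1)*Y j*Y (19+2-j) → Y 21 = 7627565912218461446430720 := by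
    intro Y X2 X3 X4 X5 X6 X7 X8 X9 X10 X11 X12 X13 X14 X15 X16 X17 X18 X19 X20 h
    rw [← Finset.Ico_add_one_right_eq_Icc, Finset.sum_Ico_eq_sum_range] at h
    norm_num [Finset.sum_range_succ, X2, X3, X4, X5, X6, X7, X8, X9, X10, X11, X12, X13, X14, X15, X16, X17, X18, X19, X20] at h
    exact h
  exact key X X2 X3 X4 X5 X6 X7 X8 X9 X10 X11 X12 X13 X14 X15 X16 X17 X18 X19 X20 (X_rec 19)
lemma X22 : X 22 = 328728342607942314200432640 := by
  have key : ∀ Y : ℕ → ℕ, Y 2 = 2 → Y 3 = 8 → Y 4 = 52 → Y 5 = 464 → Y 6 = 5184 → Y 7 = 68928 → Y 8 = 1057584 → Y 9 = 18345536 → Y 10 = 354570112 → Y 11 = 7551674624 → Y 12 = 175700025728 → Y 13 = 4433961734656 → Y 14 = 120642462777344 → Y 15 = 3520972469815296 → Y 16 = 109731998026937088 → Y 17 = 3637456413350962176 → Y 18 = 127800512612435896320 → Y 19 = 4744322680749258117120 → Y 20 = 185564718888473096325120 → Y 21 = 7627565912218461446430720 →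
      Y (20+2) = 2*(20+1)*Y (20+1) + ∑ j ∈ Finset.Icc 2 20, (j-1)*Y j*Y (20+2-j) → Y 22 = 328728342607942314200432640 := by
    intro Y X2 X3 X4 X5 X6 X7 X8 X9 X10 X11 X12 X13 X14 X15 X16 X17 X18 X19 X20 X21 h
    rw [← Finset.Ico_add_one_right_eq_Icc, Finset.sum_Ico_eq_sum_range] at h
    norm_num [Finset.sum_range_succ, X2, X3, X4, X5, X6, X7, X8, X9, X10, X11, X12, X13, X14, X15, X16, X17, X18, X19, X20, X21] at h
    exact h
  exact key X X2 X3 X4 X5 X6 X7 X8 X9 X10 X11 X12 X13 X14 X15 X16 X17 X18 X19 X20 X21 (X_rec 20)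
lemma X23 : X 23 = 14822746183248586910613995520 := by
  have key : ∀ Y : ℕ → ℕ, Y 2 = 2 → Y 3 = 8 → Y 4 = 52 → Y 5 = 464 → Y 6 = 5184 → Y 7 = 68928 → Y 8 = 1057584 → Y 9 = 18345536 → Y 10 = 354570112 → Y 11 = 7551674624 → Y 12 = 175700025728 → Y 13 = 4433961734656 → Y 14 = 120642462777344 → Y 15 = 3520972469815296 → Y 16 = 109731998026937088 → Y 17 = 3637456413350962176 → Y 18 = 127800512612435896320 → Y 19 = 4744322680749258117120 → Y 20 = 185564718888473096325120 → Y 21 = 7627565912218461446430720 → Y 22 = 328728342607942314200432640 →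
      Y (21+2) = 2*(21+1)*Y (21+1) + ∑ j ∈ Finset.Icc 2 21, (j-1)*Y j*Y (21+2-j) → Y 23 = 14822746183248586910613995520 := by
    intro Y X2 X3 X4 X5 X6 X7 X8 X9 X10 X11 X12 X13 X14 X15 X16 X17 X18 X19 X20 X21 X22 h
    rw [← Finset.Ico_add_one_right_eq_Icc, Finset.sum_Ico_eq_sum_range] at h
    norm_num [Finset.sum_range_succ, X2, X3, X4, X5, X6, X7, X8, X9, X10, X11, X12, X13, X14, X15, X16, X17, X18, X19, X20, X21, X22] at h
    exact h
  exact key X X2 X3 X4 X5 X6 X7 X8 X9 X10 X11 X12 X13 X14 X15 X16 X17 X18 X19 X20 X21 X22 (X_rec 21)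
lemma X24 : X 24 = 697939621964094814624894279680 := by
  have key : ∀ Y : ℕ → ℕ, Y 2 = 2 → Y 3 = 8 → Y 4 = 52 → Y 5 = 464 → Y 6 = 5184 → Y 7 = 68928 → Y 8 = 1057584 → Y 9 = 18345536 → Y 10 = 354570112 → Y 11 = 7551674624 → Y 12 = 175700025728 → Y 13 = 4433961734656 → Y 14 = 120642462777344 → Y 15 = 3520972469815296 → Y 16 = 109731998026937088 → Y 17 = 3637456413350962176 → Y 18 = 127800512612435896320 → Y 19 = 4744322680749258117120 → Y 20 = 185564718888473096325120 → Y 21 = 7627565912218461446430720 → Y 22 = 328728342607942314200432640 → Y 23 = 14822746183248586910613995520 →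
      Y (22+2) = 2*(22+1)*Y (22+1) + ∑ j ∈ Finset.Icc 2 22, (j-1)*Y j*Y (22+2-j) → Y 24 = 697939621964094814624894279680 := by
    intro Y X2 X3 X4 X5 X6 X7 X8 X9 X10 X11 X12 X13 X14 X15 X16 X17 X18 X19 X20 X21 X22 X23 h
    rw [← Finset.Ico_add_one_right_eq_Icc, Finset.sum_Ico_eq_sum_range] at h
    norm_num [Finset.sum_range_succ, X2, X3, X4, X5, X6, X7, X8, X9, X10, X11, X12, X13, X14, X15, X16, X17, X18, X19, X20, X21, X22, X23] at h
    exact h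
  exact key X X2 X3 X4 X5 X6 X7 X8 X9 X10 X11 X12 X13 X14 X15 X16 X17 X18 X19 X20 X21 X22 X23 (X_rec 22)
lemma X25 : X 25 = 34255507758521746659715086188544 := by
  have key : ∀ Y : ℕ → ℕ, Y 2 = 2 → Y 3 = 8 → Y 4 = 52 → Y 5 = 464 → Y 6 = 5184 → Y 7 = 68928 → Y 8 = 1057584 → Y 9 = 18345536 → Y 10 = 354570112 → Y 11 = 7551674624 → Y 12 = 175700025728 → Y 13 = 4433961734656 → Y 14 = 120642462777344 → Y 15 = 3520972469815296 → Y 16 = 109731998026937088 → Y 17 = 3637456413350962176 → Y 18 = 127800512612435896320 → Y 19 = 4744322680749258117120 → Y 20 = 185564718888473096325120 → Y 21 = 7627565912218461446430720 → Y 22 = 328728342607942314200432640 → Y 23 = 14822746183248586910613995520 → Y 24 = 697939621964094814624894279680 →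
      Y (23+2) = 2*(23+1)*Y (23+1) + ∑ j ∈ Finset.Icc 2 23, (j-1)*Y j*Y (23+2-j) → Y 25 = 34255507758521746659715086188544 := by
    intro Y X2 X3 X4 X5 X6 X7 X8 X9 X10 X11 X12 X13 X14 X15 X16 X17 X18 X19 X20 X21 X22 X23 X24 h
    rw [← Finset.Ico_add_one_right_eq_Icc, Finset.sum_Ico_eq_sum_range] at h
    norm_num [Finset.sum_range_succ, X2, X3, X4, X5, X6, X7, X8, X9, X10, X11, X12, X13, X14, X15, X16, X17, X18, X19, X20, X21, X22, X23, X24] at h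
    exact h
  exact key X X2 X3 X4 X5 X6 X7 X8 X9 X10 X11 X12 X13 X14 X15 X16 X17 X18 X19 X20 X21 X22 X23 X24 (X_rec 23)
lemma X26 : X 26 = 1749655748165731878397573794299904 := by
  have key : ∀ Y : ℕ → ℕ, Y 2 = 2 → Y 3 = 8 → Y 4 = 52 → Y 5 = 464 → Y 6 = 5184 → Y 7 = 68928 → Y 8 = 1057584 → Y 9 = 18345536 → Y 10 = 354570112 → Y 11 = 7551674624 → Y 12 = 175700025728 → Y 13 = 4433961734656 → Y 14 = 120642462777344 → Y 15 = 3520972469815296 → Y 16 = 109731998026937088 → Y 17 = 3637456413350962176 → Y 18 = 127800512612435896320 → Y 19 = 4744322680749258117120 → Y 20 = 185564718888473096325120 → Y 21 = 7627565912218461446430720 → Y 22 = 328728342607942314200432640 → Y 23 = 14822746183248586910613995520 → Y 24 = 697939621964094814624894279680 → Y 25 = 34255507758521746659715086188544 →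
      Y (24+2) = 2*(24+1)*Y (24+1) + ∑ j ∈ Finset.Icc 2 24, (j-1)*Y j*Y (24+2-j) → Y 26 = 1749655748165731878397573794299904 := by
    intro Y X2 X3 X4 X5 X6 X7 X8 X9 X10 X11 X12 X13 X14 X15 X16 X17 X18 X19 X20 X21 X22 X23 X24 X25 h
    rw [← Finset.Ico_add_one_right_eq_Icc, Finset.sum_Ico_eq_sum_range] at h
    norm_num [Finset.sum_range_succ, X2, X3, X4, X5, X6, X7, X8, X9, X10, X11, X12, X13, X14, X15, X16, X17, X18, X19, X20, X21, X22, X23, X24, X25] at h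
    exact h
  exact key X X2 X3 X4 X5 X6 X7 X8 X9 X10 X11 X12 X13 X14 X15 X16 X17 X18 X19 X20 X21 X22 X23 X24 X25 (X_rec 24)
lemma X27 : X 27 = 92859119184449072114839499989188608 := by
  have key : ∀ Y : ℕ → ℕ, Y 2 = 2 → Y 3 = 8 → Y 4 = 52 → Y 5 = 464 → Y 6 = 5184 → Y 7 = 68928 → Y 8 = 1057584 → Y 9 = 18345536 → Y 10 = 354570112 → Y 11 = 7551674624 → Y 12 = 175700025728 → Y 13 = 4433961734656 → Y 14 = 120642462777344 → Y 15 = 3520972469815296 → Y 16 = 109731998026937088 → Y 17 = 3637456413350962176 → Y 18 = 127800512612435896320 → Y 19 = 4744322680749258117120 → Y 20 = 185564718888473096325120 → Y 21 = 7627565912218461446430720 → Y 22 = 328728342607942314200432640 → Y 23 = 14822746183248586910613995520 → Y 24 = 697939621964094814624894279680 → Y 25 = 34255507758521746659715086188544 → Y 26 = 1749655748165731878397573794299904 →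
      Y (25+2) = 2*(25+1)*Y (25+1) + ∑ j ∈ Finset.Icc 2 25, (j-1)*Y j*Y (25+2-j) → Y 27 = 92859119184449072114839499989188608 := by
    intro Y X2 X3 X4 X5 X6 X7 X8 X9 X10 X11 X12 X13 X14 X15 X16 X17 X18 X19 X20 X21 X22 X23 X24 X25 X26 h
    rw [← Finset.Ico_add_one_right_eq_Icc, Finset.sum_Ico_eq_sum_range] at h
    norm_num [Finset.sum_range_succ, X2, X3, X4, X5, X6, X7, X8, X9, X10, X11, X12, X13, X14, X15, X16, X17, X18, X19, X20, X21, X22, X23, X24, X25, X26] at h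
    exact h
  exact key X X2 X3 X4 X5 X6 X7 X8 X9 X10 X11 X12 X13 X14 X15 X16 X17 X18 X19 X20 X21 X22 X23 X24 X25 X26 (X_rec 25)
lemma X28 : X 28 = 5113690447583076103263363261350477824 := by
  have key : ∀ Y : ℕ → ℕ, Y 2 = 2 → Y 3 = 8 → Y 4 = 52 → Y 5 = 464 → Y 6 = 5184 → Y 7 = 68928 → Y 8 = 1057584 → Y 9 = 18345536 → Y 10 = 354570112 → Y 11 = 7551674624 → Y 12 = 175700025728 → Y 13 = 4433961734656 → Y 14 = 120642462777344 → Y 15 = 3520972469815296 → Y 16 = 109731998026937088 → Y 17 = 3637456413350962176 → Y 18 = 127800512612435896320 → Y 19 = 4744322680749258117120 → Y 20 = 185564718888473096325120 → Y 21 = 7627565912218461446430720 → Y 22 = 328728342607942314200432640 → Y 23 = 14822746183248586910613995520 → Y 24 = 697939621964094814624894279680 → Y 25 = 34255507758521746659715086188544 → Y 26 = 1749655748165731878397573794299904 → Y 27 = 92859119184449072114839499989188608 →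
      Y (26+2) = 2*(26+1)*Y (26+1) + ∑ j ∈ Finset.Icc 2 26, (j-1)*Y j*Y (26+2-j) → Y 28 = 5113690447583076103263363261350477824 := by
    intro Y X2 X3 X4 X5 X6 X7 X8 X9 X10 X11 X12 X13 X14 X15 X16 X17 X18 X19 X20 X21 X22 X23 X24 X25 X26 X27 h
    rw [← Finset.Ico_add_one_right_eq_Icc, Finset.sum_Ico_eq_sum_range] at h
    norm_num [Finset.sum_range_succ, X2, X3, X4, X5, X6, X7, X8, X9, X10, X11, X12, X13, X14, X15, X16, X17, X18, X19, X20, X21, X22, X23, X24, X25, X26, X27] at h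
    exact h
  exact key X X2 X3 X4 X5 X6 X7 X8 X9 X10 X11 X12 X13 X14 X15 X16 X17 X18 X19 X20 X21 X22 X23 X24 X25 X26 X27 (X_rec 26)
lemma X29 : X 29 = 291818931212454595416054626953631891456 := by
  have key : ∀ Y : ℕ → ℕ, Y 2 = 2 → Y 3 = 8 → Y 4 = 52 → Y 5 = 464 → Y 6 = 5184 → Y 7 = 68928 → Y 8 = 1057584 → Y 9 = 18345536 → Y 10 = 354570112 → Y 11 = 7551674624 → Y 12 = 175700025728 → Y 13 = 4433961734656 → Y 14 = 120642462777344 → Y 15 = 3520972469815296 → Y 16 = 109731998026937088 → Y 17 = 3637456413350962176 → Y 18 = 127800512612435896320 → Y 19 = 4744322680749258117120 → Y 20 = 185564718888473096325120 → Y 21 = 7627565912218461446430720 → Y 22 = 328728342607942314200432640 → Y 23 = 14822746183248586910613995520 → Y 24 = 697939621964094814624894279680 → Y 25 = 34255507758521746659715086188544 → Y 26 = 1749655748165731878397573794299904 → Y 27 = 92859119184449072114839499989188608 → Y 28 = 5113690447583076103263363261350477824 →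
      Y (27+2) = 2*(27+1)*Y (27+1) + ∑ j ∈ Finset.Icc 2 27, (j-1)*Y j*Y (27+2-j) → Y 29 = 291818931212454595416054626953631891456 := by
    intro Y X2 X3 X4 X5 X6 X7 X8 X9 X10 X11 X12 X13 X14 X15 X16 X17 X18 X19 X20 X21 X22 X23 X24 X25 X26 X27 X28 h
    rw [← Finset.Ico_add_one_right_eq_Icc, Finset.sum_Ico_eq_sum_range] at h
    norm_num [Finset.sum_range_succ, X2, X3, X4, X5, X6, X7, X8, X9, X10, X11, X12, X13, X14, X15, X16, X17, X18, X19, X20, X21, X22, X23, X24, X25, X26, X27, X28] at h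
    exact h
  exact key X X2 X3 X4 X5 X6 X7 X8 X9 X10 X11 X12 X13 X14 X15 X16 X17 X18 X19 X20 X21 X22 X23 X24 X25 X26 X27 X28 (X_rec 27)

section Basic

lemma X_pos : ∀ n, 0 < X n := by
  intro n
  induction n using Nat.strong_induction_on with
  | _ n ih =>
    match n with
    | 0 => rw [X0]; norm_num
    | 1 => rw [X1]; norm_num
    | n + 2 =>
      rw [X_rec]
      have h1 := ih (n+1) (by omega)
      have : 0 < 2*(n+1)*X (n+1) := by positivity
      omega

lemma X_lower (n : ℕ) : 2*n*X n ≤ X (n+1) := by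
  match n with
  | 0 => simp
  | m + 1 => rw [X_rec]; exact Nat.le_add_right _ _

lemma X_step (n : ℕ) : X n ≤ X (n+1) := by
  match n with
  | 0 => rw [X0, X1]
  | m + 1 =>
    calc X (m+1) ≤ 2*(m+1)*X (m+1) := Nat.le_mul_of_pos_left _ (by positivity)
    _ ≤ X (m+2) := X_lower (m+1)

lemma X_mono : Monotone X := monotone_nat_of_le_succ X_step

lemma X_chain (a t : ℕ) : (2*a)^t * X a ≤ X (a+t) := by
  induction t with
  | zero => simp
  | succ t ih =>
    have h1 : (2*a)^(t+1) * X a = 2*a*((2*a)^t * X a) := by ring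
    rw [h1]
    calc 2*a*((2*a)^t * X a) ≤ 2*a*X (a+t) := Nat.mul_le_mul_left _ ih
    _ ≤ 2*(a+t)*X (a+t) := Nat.mul_le_mul_right _ (by omega)
    _ ≤ X (a+t+1) := X_lower (a+t)

lemma pow_fact_le (n : ℕ) (hn : 29 ≤ n) : ∀ i, 6 ≤ i → 2*i ≤ n → 2^(i-1) * i ! ≤ n^(i-3) := by
  intro i
  induction i with
  | zero => omega
  | succ i ih =>
    intro h6 h2i
    rcases Nat.lt_or_ge i 6 with h | h
    · -- i + 1 = 6
      have : i = 5 := by omega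
      subst this
      show 2^5 * 720 ≤ n^3
      calc 2^5*720 = 23040 := by norm_num
      _ ≤ 29^3 := by norm_num
      _ ≤ n^3 := Nat.pow_le_pow_left hn 3
    · have ih' := ih h (by omega)
      have h1 : 2^(i+1-1) * (i+1)! = (2*(i+1)) * (2^(i-1) * i !) := by
        rw [Nat.factorial_succ]
        have : i + 1 - 1 = (i - 1) + 1 := by omega
        rw [this, pow_succ]
        ring
      rw [h1]
      calc (2*(i+1)) * (2^(i-1) * i !) ≤ n * n^(i-3) := Nat.mul_le_mul h2i ih'
      _ = n^(i-3+1) := by rw [pow_succ]; ring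
      _ = n^(i+1-3) := by congr 1; omega

end Basic

section Ratio

lemma X_fact_le (m : ℕ) (H : ∀ i, 2 ≤ i → i ≤ m → X i ≤ 2*i*X (i-1)) :
    ∀ i, 1 ≤ i → i ≤ m → X i ≤ 2^(i-1) * i ! := by
  intro i
  induction i with
  | zero => omega
  | succ i ih =>
    intro _ him
    rcases Nat.lt_or_ge i 1 with h | h
    · have : i = 0 := by omega
      subst this; simp [X1]
    · have h1 : X (i+1) ≤ 2*(i+1)*X i := by
        have := H (i+1) (by omega) him
        simpa using this
      have h2 : X i ≤ 2^(i-1) * i ! := ih h (by omega)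
      calc X (i+1) ≤ 2*(i+1)*(2^(i-1) * i !) := le_trans h1 (Nat.mul_le_mul_left _ h2)
      _ = (2*2^(i-1)) * ((i+1) * i !) := by ring
      _ = 2^(i+1-1) * (i+1)! := by
          rw [Nat.factorial_succ]
          congr 1
          have : i + 1 - 1 = (i-1) + 1 := by omega
          rw [this, pow_succ]; ring

lemma X_ratio_upper : ∀ n, X (n+1) ≤ 2*(n+1)*X n := by
  intro n
  induction n using Nat.strong_induction_on with
  | _ n ih =>
    rcases Nat.lt_or_ge n 29 with hn | hn
    · have key : ∀ Y : ℕ → ℕ, Y 0 = 1 → Y 1 = 1 → Y 2 = 2 → Y 3 = 8 → Y 4 = 52 → Y 5 = 464 → Y 6 = 5184 → Y 7 = 68928 → Y 8 = 1057584 → Y 9 = 18345536 → Y 10 = 354570112 → Y 11 = 7551674624 → Y 12 = 175700025728 → Y 13 = 4433961734656 → Y 14 = 120642462777344 → Y 15 = 3520972469815296 → Y 16 = 109731998026937088 → Y 17 = 3637456413350962176 → Y 18 = 127800512612435896320 → Y 19 = 4744322680749258117120 → Y 20 = 185564718888473096325120 → Y 21 = 7627565912218461446430720 → Y 22 = 328728342607942314200432640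 → Y 23 = 14822746183248586910613995520 → Y 24 = 697939621964094814624894279680 → Y 25 = 34255507758521746659715086188544 → Y 26 = 1749655748165731878397573794299904 → Y 27 = 92859119184449072114839499989188608 → Y 28 = 5113690447583076103263363261350477824 → Y 29 = 291818931212454595416054626953631891456 →
          ∀ n, n < 29 → Y (n+1) ≤ 2*(n+1)*Y n := by
        intro Y X0 X1 X2 X3 X4 X5 X6 X7 X8 X9 X10 X11 X12 X13 X14 X15 X16 X17 X18 X19 X20 X21 X22 X23 X24 X25 X26 X27 X28 X29 n hn
        interval_cases n <;>
          simp [X0, X1, X2, X3, X4, X5, X6, X7, X8, X9, X10, X11, X12, X13, X14, X15, X16,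
            X17, X18, X19, X20, X21, X22, X23, X24, X25, X26, X27, X28, X29]
      exact key X X0 X1 X2 X3 X4 X5 X6 X7 X8 X9 X10 X11 X12 X13 X14 X15 X16 X17 X18 X19 X20 X21 X22 X23 X24 X25 X26 X27 X28 X29 n hn
    · -- n ≥ 29; write n+1 = (a+28)+2
      obtain ⟨a, rfl⟩ : ∃ a, n = a + 29 := ⟨n-29, by omega⟩
      have IH : ∀ i, 2 ≤ i → i ≤ a+29 → X i ≤ 2*i*X (i-1) := by
        intro i h2 hik
        obtain ⟨i', rfl⟩ : ∃ i', i = i' + 1 := ⟨i-1, by omega⟩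
        simpa using ih i' (by omega)
      have hfact := X_fact_le (a+29) IH
      have hrec := X_rec (a+28)
      rw [show a+28+2 = a+29+1 from rfl, show a+28+1 = a+29 from rfl] at hrec
      rw [hrec]
      -- middle per-term bound
      have hmid : ∀ j ∈ Finset.Icc 4 (a+26), (a+30) * (X j * X (a+30-j)) ≤ X (a+28) := by
        intro j hj
        rw [Finset.mem_Icc] at hj
        obtain ⟨i, hi4, hi2, hieq⟩ : ∃ i, 4 ≤ i ∧ 2*i ≤ a+30 ∧
            X j * X (a+30-j) = X i * X (a+30-i) := by
          rcases le_total j (a+30-j) with h | h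
          · exact ⟨j, by omega, by omega, rfl⟩
          · refine ⟨a+30-j, by omega, by omega, ?_⟩
            rw [mul_comm]
            congr 2
            omega
        rw [hieq]
        have c1 : 2*(a+27)*X (a+27) ≤ X (a+28) := X_lower (a+27)
        have c2 : 2*(a+26)*X (a+26) ≤ X (a+27) := X_lower (a+26)
        have c3 : 2*(a+25)*X (a+25) ≤ X (a+26) := X_lower (a+25)
        rcases Nat.lt_or_ge i 6 with hi6 | hi6
        · rcases Nat.lt_or_ge i 5 with hi5 | hi5
          · have : i = 4 := by omega
            subst this
            rw [show a+30-4 = a+26 by omega, X4]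
            calc (a+30) * (52 * X (a+26)) = (52*(a+30)) * X (a+26) := by ring
            _ ≤ ((2*(a+27))*(2*(a+26))) * X (a+26) := by
                refine Nat.mul_le_mul_right _ ?_
                nlinarith
            _ = 2*(a+27)*(2*(a+26)*X (a+26)) := by ring
            _ ≤ 2*(a+27)*X (a+27) := Nat.mul_le_mul_left _ c2
            _ ≤ X (a+28) := c1
          · have : i = 5 := by omega
            subst this
            rw [show a+30-5 = a+25 by omega, X5]
            calc (a+30) * (464 * X (a+25)) = (464*(a+30)) * X (a+25) := by ring
            _ ≤ ((2*(a+27))*((2*(a+26))*(2*(a+25)))) * X (a+25) := by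
                refine Nat.mul_le_mul_right _ ?_
                calc 464*(a+30) ≤ (2*(a+27))*((2*26)*(2*25)) := by omega
                _ ≤ (2*(a+27))*((2*(a+26))*(2*(a+25))) :=
                    Nat.mul_le_mul_left _ (Nat.mul_le_mul (by omega) (by omega))
            _ = 2*(a+27)*(2*(a+26)*(2*(a+25)*X (a+25))) := by ring
            _ ≤ 2*(a+27)*(2*(a+26)*X (a+26)) :=
                Nat.mul_le_mul_left _ (Nat.mul_le_mul_left _ c3)
            _ ≤ 2*(a+27)*X (a+27) := Nat.mul_le_mul_left _ c2
            _ ≤ X (a+28) := c1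
        · have hXi : X i ≤ 2^(i-1) * i ! := hfact i (by omega) (by omega)
          have hpf : 2^(i-1) * i ! ≤ (a+30)^(i-3) := pow_fact_le (a+30) (by omega) i hi6 hi2
          have hchain : (2*(a+30-i))^(i-2) * X (a+30-i) ≤ X (a+28) := by
            have := X_chain (a+30-i) (i-2)
            rwa [show a+30-i+(i-2) = a+28 by omega] at this
          have hpow : (a+30)^(i-2) ≤ (2*(a+30-i))^(i-2) :=
            Nat.pow_le_pow_left (by omega) _
          calc (a+30) * (X i * X (a+30-i)) ≤ (a+30) * ((2^(i-1) * i !) * X (a+30-i)) :=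
                Nat.mul_le_mul_left _ (Nat.mul_le_mul_right _ hXi)
          _ ≤ (a+30) * ((a+30)^(i-3) * X (a+30-i)) :=
                Nat.mul_le_mul_left _ (Nat.mul_le_mul_right _ hpf)
          _ = (a+30)^(i-3+1) * X (a+30-i) := by rw [pow_succ]; ring
          _ = (a+30)^(i-2) * X (a+30-i) := by rw [show i-3+1 = i-2 by omega]
          _ ≤ (2*(a+30-i))^(i-2) * X (a+30-i) := Nat.mul_le_mul_right _ hpow
          _ ≤ X (a+28) := hchain
      -- bound the sum
      have hS : ∑ j ∈ Finset.Icc 2 (a+28), (j-1)*X j*X (a+28+2-j) ≤ 2*X (a+29) := by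
        have hsplit : Finset.Icc 2 (a+28) =
            (Finset.Icc 2 3 ∪ Finset.Icc 4 (a+26)) ∪ Finset.Icc (a+27) (a+28) := by
          ext x
          simp only [Finset.mem_Icc, Finset.mem_union]
          omega
        have hd1 : Disjoint (Finset.Icc 2 3) (Finset.Icc 4 (a+26)) := by
          rw [Finset.disjoint_left]
          intro x hx hy
          rw [Finset.mem_Icc] at hx hy
          omega
        have hd2 : Disjoint (Finset.Icc 2 3 ∪ Finset.Icc 4 (a+26)) (Finset.Icc (a+27) (a+28)) := by
          rw [Finset.disjoint_left]
          intro x hx hy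
          simp only [Finset.mem_Icc, Finset.mem_union] at hx hy
          omega
        rw [hsplit, Finset.sum_union hd2, Finset.sum_union hd1]
        have e1 : ∑ j ∈ Finset.Icc 2 3, (j-1)*X j*X (a+28+2-j) = 2*X (a+28) + 16*X (a+27) := by
          rw [show Finset.Icc 2 3 = {2, 3} by rfl, Finset.sum_pair (by norm_num)]
          rw [show a+28+2-2 = a+28 by omega, show a+28+2-3 = a+27 by omega, X2, X3]
          try ring
        have e2 : ∑ j ∈ Finset.Icc (a+27) (a+28), (j-1)*X j*X (a+28+2-j) =
            (a+26)*X (a+27)*8 + (a+27)*X (a+28)*2 := by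
          rw [show Finset.Icc (a+27) (a+28) = {a+27, a+28} by
                ext x
                simp only [Finset.mem_Icc, Finset.mem_insert, Finset.mem_singleton]
                omega,
            Finset.sum_pair (by omega)]
          rw [show a+28+2-(a+27) = 3 by omega, show a+28+2-(a+28) = 2 by omega, X2, X3,
            show a+27-1 = a+26 by omega, show a+28-1 = a+27 by omega]
        have e3 : ∑ j ∈ Finset.Icc 4 (a+26), (j-1)*X j*X (a+28+2-j) ≤ (a+23) * X (a+28) := by
          have step1 : ∀ j ∈ Finset.Icc 4 (a+26), (j-1)*X j*X (a+28+2-j)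
              ≤ (a+30)*(X j * X (a+30-j)) := by
            intro j hj
            rw [Finset.mem_Icc] at hj
            rw [show a+28+2-j = a+30-j by omega]
            calc (j-1)*X j*X (a+30-j) = (j-1)*(X j*X (a+30-j)) := by ring
            _ ≤ (a+30)*(X j * X (a+30-j)) := Nat.mul_le_mul_right _ (by omega)
          calc ∑ j ∈ Finset.Icc 4 (a+26), (j-1)*X j*X (a+28+2-j)
              ≤ ∑ j ∈ Finset.Icc 4 (a+26), (a+30)*(X j * X (a+30-j)) := Finset.sum_le_sum step1
          _ ≤ ∑ _j ∈ Finset.Icc 4 (a+26), X (a+28) := Finset.sum_le_sum hmid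
          _ = (a+23) * X (a+28) := by
              rw [Finset.sum_const, Nat.card_Icc, smul_eq_mul,
                show a+26+1-4 = a+23 by omega]
        rw [e1, e2]
        have c1 : 2*(a+27)*X (a+27) ≤ X (a+28) := X_lower (a+27)
        have ck : 2*(a+28)*X (a+28) ≤ X (a+29) := X_lower (a+28)
        have hB8 : 16*X (a+27) ≤ X (a+28) := by
          calc 16*X (a+27) ≤ 2*(a+27)*X (a+27) := Nat.mul_le_mul_right _ (by omega)
          _ ≤ X (a+28) := c1
        have hB4 : (a+26)*X (a+27)*8 ≤ 4*X (a+28) := by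
          calc (a+26)*X (a+27)*8 = ((a+26)*8)*X (a+27) := by ring
          _ ≤ (4*(2*(a+27)))*X (a+27) := Nat.mul_le_mul_right _ (by omega)
          _ = 4*(2*(a+27)*X (a+27)) := by ring
          _ ≤ 4*X (a+28) := Nat.mul_le_mul_left _ c1
        have hfin : 2*X (a+28) + (a+23)*X (a+28) + (a+27)*X (a+28)*2 + 5*X (a+28)
            ≤ 2*X (a+29) := by
          have heq : 2*X (a+28) + (a+23)*X (a+28) + (a+27)*X (a+28)*2 + 5*X (a+28)
              = (3*a+84)*X (a+28) := by ring
          rw [heq]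
          calc (3*a+84)*X (a+28) ≤ (2*(2*(a+28)))*X (a+28) := Nat.mul_le_mul_right _ (by omega)
          _ = 2*(2*(a+28)*X (a+28)) := by ring
          _ ≤ 2*X (a+29) := Nat.mul_le_mul_left _ ck
        omega
      calc 2*(a+29)*X (a+29) + ∑ j ∈ Finset.Icc 2 (a+28), (j-1)*X j*X (a+28+2-j)
          ≤ 2*(a+29)*X (a+29) + 2*X (a+29) := by omega
      _ = 2*(a+29+1)*X (a+29) := by ring

end Ratio

section Analytic

open Filter Real

noncomputable def v (n : ℕ) : ℝ := (X n : ℝ) / (2^n * n !)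

lemma v_pos (n : ℕ) : 0 < v n := by
  have := X_pos n
  rw [v]
  positivity

lemma v_succ_le (n : ℕ) : v (n+1) ≤ v n := by
  rw [v, v, div_le_div_iff₀ (by positivity) (by positivity)]
  have h : ((X (n+1)):ℝ) ≤ 2*(n+1)*X n := by exact_mod_cast X_ratio_upper n
  calc ((X (n+1)):ℝ) * (2^n * n !) ≤ (2*(n+1)*X n) * (2^n * n !) :=
        mul_le_mul_of_nonneg_right h (by positivity)
  _ = (X n) * (2^(n+1) * (n+1)!) := by rw [Nat.factorial_succ]; push_cast; ring

lemma v_anti : ∀ {a b : ℕ}, a ≤ b → v b ≤ v a :=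
  fun hab => antitone_nat_of_succ_le v_succ_le hab

lemma v_mul_succ (n : ℕ) : (n:ℝ) * v n ≤ (n+1:ℕ) * v (n+1) := by
  rw [v, v, ← mul_div_assoc, ← mul_div_assoc, div_le_div_iff₀ (by positivity) (by positivity)]
  have h : (2*n*X n : ℝ) ≤ X (n+1) := by exact_mod_cast X_lower n
  calc (n:ℝ) * (X n) * (2^(n+1) * (n+1)!) = ((2*n*X n) * (2^n * n !)) * (n+1) := by
        rw [Nat.factorial_succ]; push_cast; ring
  _ ≤ ((X (n+1)) * (2^n * n !)) * (n+1) := by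
        refine mul_le_mul_of_nonneg_right (mul_le_mul_of_nonneg_right h (by positivity)) ?_
        positivity
  _ = ((n+1:ℕ):ℝ) * (X (n+1)) * (2^n * n !) := by push_cast; ring

lemma v_mul_mono : ∀ {a b : ℕ}, a ≤ b → (a:ℝ) * v a ≤ (b:ℝ) * v b := by
  intro a b hab
  induction b, hab using Nat.le_induction with
  | base => exact le_refl _
  | succ b hab ih => exact le_trans ih (by exact_mod_cast v_mul_succ b)

lemma term_eq (n j : ℕ) (hj : j ≤ n) :
    (n.choose j : ℝ) * (X (n-j) : ℝ) / (X n : ℝ) = (v (n-j) / v n) * (1/(2^j * j !)) := by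
  have hc : (n.choose j : ℝ) * j ! * (n-j)! = n ! := by
    exact_mod_cast Nat.choose_mul_factorial_mul_factorial hj
  have hp : (2:ℝ)^(n-j) * 2^j = 2^n := by
    rw [← pow_add]
    congr 1
    omega
  have hXn : (0:ℝ) < X n := by exact_mod_cast X_pos n
  have hf1 : (0:ℝ) < (n ! : ℝ) := by exact_mod_cast Nat.factorial_pos n
  have hf2 : (0:ℝ) < ((n-j)! : ℝ) := by exact_mod_cast Nat.factorial_pos (n-j)
  have hf3 : (0:ℝ) < (j ! : ℝ) := by exact_mod_cast Nat.factorial_pos j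
  rw [v, v]
  field_simp
  rw [← hc, ← hp]
  ring

end Analytic

section Main

open Filter Real
open scoped Topology

noncomputable def fD (n j : ℕ) : ℝ :=
  if 1 ≤ j ∧ j ≤ n - 2 then (n.choose j : ℝ) * (X (n-j) : ℝ) / (X n : ℝ)
  else if j = 0 then 1 / (X n : ℝ) else 0

noncomputable def gD (j : ℕ) : ℝ := if 1 ≤ j then 1/(2^j * (j ! : ℝ)) else 0

noncomputable def BD (j : ℕ) : ℝ := if j = 0 then 1 else (2*j+2)/(2^j * (j ! : ℝ))

lemma fD_nonneg (n j : ℕ) : 0 ≤ fD n j := by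
  rw [fD]
  have h1 : (0:ℝ) ≤ (X n : ℝ) := by positivity
  split_ifs <;> positivity

lemma fD_eq (n j : ℕ) (h1 : 1 ≤ j) (h2 : j + 2 ≤ n) :
    fD n j = (v (n-j) / v n) * (1/(2^j * (j ! : ℝ))) := by
  rw [fD, if_pos ⟨h1, by omega⟩]
  exact term_eq n j (by omega)

lemma X_ge_self (n : ℕ) : n ≤ X n := by
  match n with
  | 0 => exact Nat.zero_le _
  | m + 1 =>
    have h1 := X_lower m
    have h2 := X_pos m
    rcases Nat.eq_zero_or_pos m with rfl | hm
    · rw [X1]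
    · have : 2*m*1 ≤ 2*m*X m := Nat.mul_le_mul_left _ h2
      omega

lemma ratio_ge_one (n j : ℕ) (h : j ≤ n) : 1 ≤ v (n-j) / v n :=
  (one_le_div (v_pos n)).mpr (v_anti (Nat.sub_le n j))

lemma ratio_le (n j : ℕ) (h : j + 1 ≤ n) : v (n-j) / v n ≤ (n:ℝ)/((n:ℝ)-j) := by
  have hj : (j:ℝ) < (n:ℝ) := by exact_mod_cast h
  rw [div_le_div_iff₀ (v_pos n) (by linarith)]
  have hm := v_mul_mono (Nat.sub_le n j)
  rw [Nat.cast_sub (by omega)] at hm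
  linarith [hm]

lemma aux_div (j : ℕ) : Tendsto (fun n : ℕ => (n:ℝ)/((n:ℝ)-j)) atTop (𝓝 1) := by
  have h1 : Tendsto (fun n : ℕ => (n:ℝ) - j) atTop atTop := by
    simpa [sub_eq_add_neg] using tendsto_atTop_add_const_right atTop (-(j:ℝ))
      tendsto_natCast_atTop_atTop
  have h2 : Tendsto (fun n : ℕ => ((n:ℝ)-j)⁻¹) atTop (𝓝 0) := h1.inv_tendsto_atTop
  have h3 : Tendsto (fun n : ℕ => 1 + (j:ℝ)*((n:ℝ)-j)⁻¹) atTop (𝓝 (1 + (j:ℝ)*0)) :=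
    tendsto_const_nhds.add (h2.const_mul _)
  rw [mul_zero, add_zero] at h3
  apply h3.congr'
  filter_upwards [eventually_ge_atTop (j+1)] with n hn
  have hj : (j:ℝ) < (n:ℝ) := by exact_mod_cast hn
  have hne : (n:ℝ) - j ≠ 0 := by linarith
  field_simp
  ring

lemma fD_tendsto (j : ℕ) : Tendsto (fun n => fD n j) atTop (𝓝 (gD j)) := by
  rcases Nat.eq_zero_or_pos j with rfl | hj
  · -- j = 0
    have hgd : gD 0 = 0 := by rw [gD]; norm_num
    rw [hgd]
    apply tendsto_of_tendsto_of_tendsto_of_le_of_le' tendsto_const_nhds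
      tendsto_one_div_atTop_nhds_zero_nat
    · exact Eventually.of_forall fun n => fD_nonneg n 0
    · filter_upwards [eventually_ge_atTop 1] with n hn
      have h1 : fD n 0 = 1 / (X n : ℝ) := by rw [fD]; norm_num
      rw [h1]
      have h2 : (n:ℝ) ≤ (X n : ℝ) := by exact_mod_cast X_ge_self n
      have h3 : (0:ℝ) < n := by exact_mod_cast hn
      exact one_div_le_one_div_of_le h3 h2
  · have hgd : gD j = 1/(2^j * (j ! : ℝ)) := by rw [gD, if_pos (show 1 ≤ j by omega)]
    have hL : (0:ℝ) < 1/(2^j * (j ! : ℝ)) := by positivity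
    have hup : Tendsto (fun n : ℕ => ((n:ℝ)/((n:ℝ)-j)) * (1/(2^j * (j ! : ℝ)))) atTop
        (𝓝 (1 * (1/(2^j * (j ! : ℝ))))) := (aux_div j).mul_const _
    rw [one_mul] at hup
    rw [hgd]
    apply tendsto_of_tendsto_of_tendsto_of_le_of_le' tendsto_const_nhds hup
    · filter_upwards [eventually_ge_atTop (j+2)] with n hn
      rw [fD_eq n j hj hn]
      nlinarith [ratio_ge_one n j (by omega), hL]
    · filter_upwards [eventually_ge_atTop (j+2)] with n hn
      rw [fD_eq n j hj hn]
      have := ratio_le n j (by omega)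
      nlinarith [hL]

lemma v_two : v 2 = 1/4 := by rw [v, X2]; norm_num

lemma fD_bound : ∀ᶠ n in atTop, ∀ j, ‖fD n j‖ ≤ BD j := by
  filter_upwards [eventually_ge_atTop 2] with n hn
  intro j
  rw [Real.norm_eq_abs, abs_of_nonneg (fD_nonneg n j)]
  rcases Nat.eq_zero_or_pos j with rfl | hj
  · have h1 : fD n 0 = 1 / (X n : ℝ) := by rw [fD]; norm_num
    rw [h1, BD, if_pos rfl]
    have h2 : (1:ℝ) ≤ (X n : ℝ) := by exact_mod_cast X_pos n
    rw [div_le_one (by linarith)]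
    exact h2
  · rw [BD, if_neg (by omega)]
    have hL : (0:ℝ) < 1/(2^j * (j ! : ℝ)) := by positivity
    rcases Nat.lt_or_ge (n-2) j with hcase | hcase
    · -- fD = 0
      rw [fD, if_neg (by omega), if_neg (by omega)]
      positivity
    · rw [fD_eq n j hj (by omega)]
      have hjr : (1:ℝ) ≤ (j:ℝ) := by exact_mod_cast hj
      have key : v (n-j) / v n ≤ 2*(j:ℝ)+2 := by
        rcases le_or_gt (2*j) n with h2j | h2j
        · -- ratio ≤ n/(n-j) ≤ 2
          have h1 := ratio_le n j (by omega)
          have hj2 : (j:ℝ) < (n:ℝ) := by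
            have : j < n := by omega
            exact_mod_cast this
          have h2 : (n:ℝ)/((n:ℝ)-j) ≤ 2 := by
            rw [div_le_iff₀ (by linarith)]
            have : (2*j:ℕ) ≤ (n:ℕ) := h2j
            have h3 : 2*(j:ℝ) ≤ (n:ℝ) := by exact_mod_cast this
            linarith
          linarith
        · -- n < 2j : use v (n-j) ≤ v 2 = 1/4 and v n ≥ 1/(2n)
          have hd2 : 2 ≤ n - j := by omega
          have hv1 : v (n-j) ≤ 1/4 := by
            have := v_anti (show 2 ≤ n - j from hd2)
            rwa [v_two] at this
          have hv2 : 1/(2*(n:ℝ)) ≤ v n := by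
            have hm := v_mul_mono (show 2 ≤ n from hn)
            rw [v_two] at hm
            have hn0 : (0:ℝ) < n := by exact_mod_cast (by omega : 0 < n)
            rw [div_le_iff₀ (by linarith), mul_comm]
            norm_num at hm ⊢
            linarith
          have hn0 : (0:ℝ) < n := by exact_mod_cast (by omega : 0 < n)
          have hvn := v_pos n
          have h2n : (n:ℝ) ≤ 2*(j:ℝ) := by
            have : n ≤ 2*j := by omega
            exact_mod_cast this
          calc v (n-j) / v n ≤ (1/4) / (1/(2*(n:ℝ))) :=
                div_le_div₀ (by norm_num) hv1 (by positivity) hv2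
          _ = (n:ℝ)/2 := by field_simp; ring
          _ ≤ (j:ℝ) := by linarith
          _ ≤ 2*(j:ℝ)+2 := by linarith
      calc v (n-j) / v n * (1/(2^j * (j ! : ℝ))) ≤ (2*(j:ℝ)+2) * (1/(2^j * (j ! : ℝ))) := by
            nlinarith [hL]
      _ = (2*(j:ℝ)+2)/(2^j * (j ! : ℝ)) := by ring
      _ = (2*(j:ℕ)+2 : ℝ)/(2^j * (j ! : ℝ)) := by norm_num

lemma BD_summable : Summable BD := by
  have hle : ∀ j, BD j ≤ 4 * (1/2:ℝ)^j := by
    intro j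
    rw [BD]
    split_ifs with h
    · subst h; norm_num
    · have hnat : 2*j+2 ≤ 4*j ! := by
        have h1 : j ≤ j ! := Nat.self_le_factorial j
        have h2 : 1 ≤ j ! := Nat.one_le_iff_ne_zero.mpr (Nat.factorial_ne_zero j)
        omega
      have hr : (2*(j:ℝ)+2) ≤ 4*(j ! : ℝ) := by exact_mod_cast hnat
      have hf : (0:ℝ) < (j ! : ℝ) := by exact_mod_cast Nat.factorial_pos j
      rw [div_le_iff₀ (by positivity)]
      have hpow1 : (1/2:ℝ)^j * 2^j = 1 := by
        rw [← mul_pow]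
        norm_num
      calc (2*(j:ℝ)+2) ≤ 4*(j ! : ℝ) := hr
      _ = 4 * (1/2:ℝ)^j * (2^j * (j ! : ℝ)) := by
          rw [show 4 * (1/2:ℝ)^j * (2^j * (j ! : ℝ)) = 4 * ((1/2:ℝ)^j * 2^j) * (j ! : ℝ) by ring,
            hpow1]
          ring
  have hB : Summable (fun j => 4 * (1/2:ℝ)^j) :=
    (summable_geometric_of_lt_one (by norm_num) (by norm_num)).mul_left 4
  apply Summable.of_nonneg_of_le ?_ hle hB
  intro j
  rw [BD]
  split_ifs
  · norm_num
  · positivity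

lemma gD_summable : Summable gD := by
  apply Summable.of_nonneg_of_le ?_ ?_ (Real.summable_pow_div_factorial (1/2))
  · intro j; rw [gD]; split_ifs <;> positivity
  · intro j
    rw [gD]
    split_ifs with h
    · rw [one_div, div_eq_mul_inv, one_div]
      rw [mul_inv, inv_pow]
    · positivity

lemma gD_tsum : ∑' j, gD j = Real.sqrt (Real.exp 1) - 1 := by
  have hh : Summable (fun j : ℕ => (1/2:ℝ)^j / (j ! : ℝ)) := Real.summable_pow_div_factorial _
  have hexp : ∑' j : ℕ, ((1/2:ℝ)^j / (j ! : ℝ)) = Real.exp (1/2) := by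
    rw [Real.exp_eq_exp_ℝ, NormedSpace.exp_eq_tsum_div]
  have hsq : Real.sqrt (Real.exp 1) = Real.exp (1/2) := by
    rw [show Real.exp 1 = (Real.exp (1/2))^2 by rw [sq, ← Real.exp_add]; norm_num]
    exact Real.sqrt_sq (Real.exp_pos _).le
  rw [hsq, ← hexp]
  rw [Summable.tsum_eq_zero_add hh, Summable.tsum_eq_zero_add gD_summable]
  have h0 : gD 0 = 0 := by rw [gD]; norm_num
  rw [h0]
  have hcong : ∀ j : ℕ, gD (j+1) = (1/2:ℝ)^(j+1) / ((j+1)! : ℝ) := by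
    intro j
    rw [gD, if_pos (by omega)]
    rw [one_div, div_eq_mul_inv, one_div, mul_inv, inv_pow]
  rw [tsum_congr hcong]
  norm_num

lemma D_eq_tsum (n : ℕ) (hn : 2 ≤ n) : (D n : ℝ) / (X n : ℝ) = ∑' j, fD n j := by
  have hsupp : ∀ j ∉ Finset.range (n-1), fD n j = 0 := by
    intro j hjm
    rw [Finset.mem_range, not_lt] at hjm
    rw [fD, if_neg (by omega), if_neg (by omega)]
  rw [tsum_eq_sum hsupp]
  rw [show Finset.range (n-1) = insert 0 (Finset.Icc 1 (n-2)) by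
      ext x
      simp only [Finset.mem_range, Finset.mem_insert, Finset.mem_Icc]
      omega]
  rw [Finset.sum_insert (by simp)]
  have h0 : fD n 0 = 1 / (X n : ℝ) := by rw [fD]; norm_num
  rw [h0]
  have hterm : ∀ j ∈ Finset.Icc 1 (n-2), fD n j = (n.choose j : ℝ) * (X (n-j) : ℝ) / (X n : ℝ) := by
    intro j hjm
    rw [Finset.mem_Icc] at hjm
    rw [fD, if_pos ⟨hjm.1, hjm.2⟩]
  rw [Finset.sum_congr rfl hterm]
  rw [D]
  push_cast
  rw [add_div]
  congr 1
  rw [Finset.sum_div]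

theorem D_div_X_tendsto' :
    Filter.Tendsto (fun n : ℕ => (D n : ℝ) / (X n : ℝ)) Filter.atTop
      (nhds (Real.sqrt (Real.exp 1) - 1)) := by
  have key := tendsto_tsum_of_dominated_convergence BD_summable fD_tendsto fD_bound
  rw [gD_tsum] at key
  apply key.congr'
  filter_upwards [eventually_ge_atTop 2] with n hn
  exact (D_eq_tsum n hn).symm

end Main

/-- `D_n / X_n → √e - 1` as `n → ∞`. -/
theorem D_div_X_tendsto :
    Filter.Tendsto (fun n : ℕ => (D n : ℝ) / (X n : ℝ)) Filter.atTop
      (nhds (Real.sqrt (Real.exp 1) - 1)) := D_div_X_tendsto'
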